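/- Let 0 < k, s₁ > 0, s₂ > 0, c ≥ 0, and let f, g : [0, R] → ℝ satisfy |f(x)| ≤ C₁ x^{s₁ - k} e^{c x^k} / Γ(s₁/k) and |g(x)| ≤ C₂ x^{s₂ - k} e^{c x^k} / Γ(s₂/k) for x ∈ (0, R]. Then for all ξ ∈ (0, R], the k-convolution (f ∗ₖ g)(ξ) := ∫₀^ξ f((ξ^k - η^k)^{1/k}) g(η) d(η^k) satisfies |(f ∗ₖ g)(ξ)| ≤ C₁ C₂ ξ^{s₁+s₂-k} e^{c ξ^k} / Γ((s₁+s₂)/k). -/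

import Mathlib

open Real
open MeasureTheory Set intervalIntegral

lemma my_beta_integrable {p q : ℝ} (hp : 0 < p) (hq : 0 < q) :
    IntervalIntegrable (fun u : ℝ => u ^ (p - 1) * (1 - u) ^ (q - 1)) volume 0 1 := by
  have hC : IntervalIntegrable (fun u : ℝ => (u : ℂ) ^ ((p : ℂ) - 1) * (1 - u) ^ ((q : ℂ) - 1))
      volume 0 1 := Complex.betaIntegral_convergent (by simpa) (by simpa)
  rw [intervalIntegrable_iff_integrableOn_Ioc_of_le zero_le_one] at hC ⊢
  have hre : IntegrableOn
      (fun x : ℝ => RCLike.re ((x : ℂ) ^ ((p : ℂ) - 1) * (1 - x) ^ ((q : ℂ) - 1)))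
      (Ioc (0:ℝ) 1) := hC.re
  refine hre.congr_fun (fun x hx => ?_) measurableSet_Ioc
  have hx0 : (0:ℝ) ≤ x := hx.1.le
  have hx1 : (0:ℝ) ≤ 1 - x := by linarith [hx.2]
  show RCLike.re ((x : ℂ) ^ ((p : ℂ) - 1) * (1 - x) ^ ((q : ℂ) - 1)) = _
  rw [show ((p:ℂ) - 1) = ((p - 1 : ℝ) : ℂ) by push_cast; ring,
    show ((q:ℂ) - 1) = ((q - 1 : ℝ) : ℂ) by push_cast; ring,
    show (1 - (x:ℂ)) = ((1 - x : ℝ) : ℂ) by push_cast; ring,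
    ← Complex.ofReal_cpow hx0, ← Complex.ofReal_cpow hx1, ← Complex.ofReal_mul]
  simp

lemma my_beta_value {p q : ℝ} (hp : 0 < p) (hq : 0 < q) :
    ∫ u in (0:ℝ)..1, u ^ (p - 1) * (1 - u) ^ (q - 1)
      = Gamma p * Gamma q / Gamma (p + q) := by
  have key := Complex.Gamma_mul_Gamma_eq_betaIntegral
    (s := (p : ℂ)) (t := (q : ℂ)) (by simpa) (by simpa)
  have hbeta : Complex.betaIntegral p q
      = ((∫ u in (0:ℝ)..1, u ^ (p - 1) * (1 - u) ^ (q - 1) : ℝ) : ℂ) := by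
    rw [Complex.betaIntegral, ← intervalIntegral.integral_ofReal]
    refine intervalIntegral.integral_congr fun x hx => ?_
    rw [uIcc_of_le zero_le_one] at hx
    have hx0 : (0:ℝ) ≤ x := hx.1
    have hx1 : (0:ℝ) ≤ 1 - x := by linarith [hx.2]
    rw [show ((p:ℂ) - 1) = ((p - 1 : ℝ) : ℂ) by push_cast; ring,
      show ((q:ℂ) - 1) = ((q - 1 : ℝ) : ℂ) by push_cast; ring,
      show (1 - (x:ℂ)) = ((1 - x : ℝ) : ℂ) by push_cast; ring,
      ← Complex.ofReal_cpow hx0, ← Complex.ofReal_cpow hx1, ← Complex.ofReal_mul]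
  rw [hbeta, Complex.Gamma_ofReal, Complex.Gamma_ofReal,
    show ((p:ℂ) + q) = ((p + q : ℝ) : ℂ) by push_cast; ring, Complex.Gamma_ofReal,
    ← Complex.ofReal_mul, ← Complex.ofReal_mul] at key
  have hΓ : Gamma (p + q) ≠ 0 := (Gamma_pos_of_pos (by linarith)).ne'
  have := Complex.ofReal_injective key
  field_simp
  linarith [this]

lemma my_beta_scaled_integrable {p q a : ℝ} (hp : 0 < p) (hq : 0 < q) (ha : 0 < a) :
    IntegrableOn (fun t : ℝ => t ^ (p - 1) * (a - t) ^ (q - 1)) (Ioc 0 a) := by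
  have h0 := (my_beta_integrable hp hq).comp_mul_right (c := a⁻¹)
  have ha' : a⁻¹ ≠ 0 := inv_ne_zero ha.ne'
  rw [show (0:ℝ) / a⁻¹ = 0 by simp, show (1:ℝ) / a⁻¹ = a by field_simp] at h0
  have h1 := (h0.const_mul (a ^ (p - 1) * a ^ (q - 1)))
  rw [intervalIntegrable_iff_integrableOn_Ioc_of_le ha.le] at h1
  refine h1.congr_fun (fun t ht => ?_) measurableSet_Ioc
  have ht0 : 0 ≤ t := ht.1.le
  have hta : 0 ≤ a - t := by linarith [ht.2]
  have e1 : t * a⁻¹ = t / a := by ring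
  have e2 : (1 : ℝ) - t / a = (a - t) / a := by field_simp
  simp only [e1, e2, Real.div_rpow ht0 ha.le, Real.div_rpow hta ha.le]
  rw [Real.rpow_sub ha, Real.rpow_sub ha, Real.rpow_one]
  field_simp

lemma my_beta_scaled_value {p q a : ℝ} (hp : 0 < p) (hq : 0 < q) (ha : 0 < a) :
    ∫ t in (0:ℝ)..a, t ^ (p - 1) * (a - t) ^ (q - 1)
      = a ^ (p + q - 1) * (Gamma p * Gamma q / Gamma (p + q)) := by
  have subst := intervalIntegral.smul_integral_comp_mul_right
    (fun t : ℝ => t ^ (p - 1) * (a - t) ^ (q - 1)) (a := 0) (b := 1) a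
  rw [zero_mul, one_mul] at subst
  rw [← subst]
  have congr1 : ∫ u in (0:ℝ)..1, (u * a) ^ (p - 1) * (a - u * a) ^ (q - 1)
      = ∫ u in (0:ℝ)..1, (a ^ (p - 1) * a ^ (q - 1)) * (u ^ (p - 1) * (1 - u) ^ (q - 1)) := by
    refine intervalIntegral.integral_congr fun u hu => ?_
    rw [uIcc_of_le zero_le_one] at hu
    have hu0 : 0 ≤ u := hu.1
    have hu1 : 0 ≤ 1 - u := by linarith [hu.2]
    have e1 : u * a = a * u := by ring
    have e2 : a - a * u = a * (1 - u) := by ring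
    rw [e1, e2, Real.mul_rpow ha.le hu0, Real.mul_rpow ha.le hu1]
    ring
  rw [congr1, intervalIntegral.integral_const_mul, my_beta_value hp hq, smul_eq_mul]
  have epow : a * (a ^ (p - 1) * a ^ (q - 1)) = a ^ (p + q - 1) := by
    nth_rewrite 1 [← Real.rpow_one a]
    rw [← Real.rpow_add ha, ← Real.rpow_add ha]
    congr 1
    ring
  rw [← epow]
  ring

lemma my_subst {k s₁ s₂ ξ : ℝ} (hk : 0 < k) (hs₁ : 0 < s₁) (hs₂ : 0 < s₂) (hξ : 0 < ξ) :
    IntegrableOn (fun t : ℝ => k * ((ξ ^ k - t ^ k) ^ (s₁ / k - 1) * t ^ (s₂ - 1))) (Ioc 0 ξ) ∧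
    ∫ t in (0:ℝ)..ξ, k * ((ξ ^ k - t ^ k) ^ (s₁ / k - 1) * t ^ (s₂ - 1))
      = ξ ^ (s₁ + s₂ - k) * (Gamma (s₂ / k) * Gamma (s₁ / k) / Gamma ((s₁ + s₂) / k)) := by
  have hp : 0 < s₂ / k := div_pos hs₂ hk
  have hq : 0 < s₁ / k := div_pos hs₁ hk
  have ha : 0 < ξ ^ k := rpow_pos_of_pos hξ k
  set a := ξ ^ k with ha_def
  set p := s₂ / k with hp_def
  set q := s₁ / k with hq_def
  set ψ : ℝ → ℝ := fun t => k * ((a - t ^ k) ^ (q - 1) * t ^ (s₂ - 1)) with hψ_def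
  set gfun : ℝ → ℝ := (Ioc 0 a).indicator (fun t => t ^ (p - 1) * (a - t) ^ (q - 1))
    with hg_def
  have hF : IntegrableOn (fun t : ℝ => t ^ (p - 1) * (a - t) ^ (q - 1)) (Ioc 0 a) :=
    my_beta_scaled_integrable hp hq ha
  have hgi : IntegrableOn gfun (Ioi 0) :=
    ((integrable_indicator_iff measurableSet_Ioc).2 hF).integrableOn
  have hEq : Set.EqOn (fun x : ℝ => (|k| * x ^ (k - 1)) • gfun (x ^ k))
      ((Ioc 0 ξ).indicator ψ) (Ioi 0) := by
    intro x hx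
    have hx0 : (0:ℝ) < x := hx
    simp only [smul_eq_mul, abs_of_pos hk]
    by_cases hxξ : x ≤ ξ
    · have hmem : x ^ k ∈ Ioc 0 a := ⟨rpow_pos_of_pos hx0 _, Real.rpow_le_rpow hx0.le hxξ hk.le⟩
      rw [hg_def, indicator_of_mem hmem, indicator_of_mem (mem_Ioc.mpr ⟨hx0, hxξ⟩)]
      have e1 : (x ^ k) ^ (p - 1) = x ^ (s₂ - k) := by
        rw [← Real.rpow_mul hx0.le]
        congr 1
        rw [hp_def]
        field_simp
      have e2 : x ^ (k - 1) * x ^ (s₂ - k) = x ^ (s₂ - 1) := by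
        rw [← Real.rpow_add hx0]; congr 1; ring
      rw [e1, hψ_def]
      simp only
      rw [← e2]
      ring
    · push_neg at hxξ
      have hnot : x ^ k ∉ Ioc 0 a := fun hmem' =>
        absurd hmem'.2 (not_le.2 (Real.rpow_lt_rpow hξ.le hxξ hk))
      rw [hg_def, indicator_of_notMem hnot,
        indicator_of_notMem (fun h => absurd h.2 (not_le.2 hxξ))]
      ring
  have hcomp : IntegrableOn (fun x : ℝ => (|k| * x ^ (k - 1)) • gfun (x ^ k)) (Ioi 0) :=
    (integrableOn_Ioi_comp_rpow_iff gfun hk.ne').2 hgi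
  have hind : IntegrableOn ((Ioc 0 ξ).indicator ψ) (Ioi 0) :=
    hcomp.congr_fun hEq measurableSet_Ioi
  constructor
  · have h' : IntegrableOn ((Ioc 0 ξ).indicator ψ) (Ioc 0 ξ) :=
      hind.mono_set Ioc_subset_Ioi_self
    exact h'.congr_fun (fun x hx => indicator_of_mem hx ψ) measurableSet_Ioc
  · have v1 : ∫ t in (0:ℝ)..ξ, ψ t = ∫ t in Ioc (0:ℝ) ξ, ψ t :=
      intervalIntegral.integral_of_le hξ.le
    have v2 : ∫ x in Ioi (0:ℝ), (Ioc 0 ξ).indicator ψ x = ∫ t in Ioc (0:ℝ) ξ, ψ t := by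
      rw [setIntegral_indicator measurableSet_Ioc,
        inter_eq_self_of_subset_right Ioc_subset_Ioi_self]
    have v3 : ∫ x in Ioi (0:ℝ), (|k| * x ^ (k - 1)) • gfun (x ^ k)
        = ∫ x in Ioi (0:ℝ), (Ioc 0 ξ).indicator ψ x :=
      setIntegral_congr_fun measurableSet_Ioi hEq
    have v4 : ∫ y in Ioi (0:ℝ), gfun y
        = ∫ t in Ioc (0:ℝ) a, t ^ (p - 1) * (a - t) ^ (q - 1) := by
      rw [hg_def, setIntegral_indicator measurableSet_Ioc,
        inter_eq_self_of_subset_right Ioc_subset_Ioi_self]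
    have v5 := integral_comp_rpow_Ioi gfun hk.ne'
    have v6 : ∫ t in Ioc (0:ℝ) a, t ^ (p - 1) * (a - t) ^ (q - 1)
        = a ^ (p + q - 1) * (Gamma p * Gamma q / Gamma (p + q)) := by
      rw [← intervalIntegral.integral_of_le ha.le]
      exact my_beta_scaled_value hp hq ha
    have epow : a ^ (p + q - 1) = ξ ^ (s₁ + s₂ - k) := by
      rw [ha_def, ← Real.rpow_mul hξ.le]
      congr 1
      rw [hp_def, hq_def]
      field_simp
      ring
    have eΓ : Gamma (p + q) = Gamma ((s₁ + s₂) / k) := by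
      rw [hp_def, hq_def, ← add_div, add_comm s₂ s₁]
    rw [v1, ← v2, ← v3, v5, v4, v6, epow, eΓ]

theorem stmt_1 (k s₁ s₂ c C₁ C₂ R : ℝ) (hk : 0 < k) (hs₁ : 0 < s₁) (hs₂ : 0 < s₂)
    (hc : 0 ≤ c) (hR : 0 < R) (f g : ℝ → ℝ)
    (hf : ∀ x ∈ Set.Ioc (0:ℝ) R, |f x| ≤ C₁ * x ^ (s₁ - k) * exp (c * x ^ k) / Gamma (s₁ / k))
    (hg : ∀ x ∈ Set.Ioc (0:ℝ) R, |g x| ≤ C₂ * x ^ (s₂ - k) * exp (c * x ^ k) / Gamma (s₂ / k)) :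
    ∀ ξ ∈ Set.Ioc (0:ℝ) R,
      |∫ η in (0:ℝ)..ξ, f ((ξ ^ k - η ^ k) ^ (1 / k)) * g η * (k * η ^ (k - 1))|
        ≤ C₁ * C₂ * ξ ^ (s₁ + s₂ - k) * exp (c * ξ ^ k) / Gamma ((s₁ + s₂) / k) := by
  intro ξ hξ
  obtain ⟨hξ0, hξR⟩ := hξ
  have hΓ1 : 0 < Gamma (s₁ / k) := Gamma_pos_of_pos (div_pos hs₁ hk)
  have hΓ2 : 0 < Gamma (s₂ / k) := Gamma_pos_of_pos (div_pos hs₂ hk)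
  have hΓ3 : 0 < Gamma ((s₁ + s₂) / k) := Gamma_pos_of_pos (div_pos (by linarith) hk)
  have hC₁ : 0 ≤ C₁ := by
    by_contra h
    push_neg at h
    have hx := (abs_nonneg (f R)).trans (hf R ⟨hR, le_rfl⟩)
    have hneg : C₁ * R ^ (s₁ - k) * exp (c * R ^ k) / Gamma (s₁ / k) < 0 :=
      div_neg_of_neg_of_pos
        (by nlinarith [mul_pos (rpow_pos_of_pos hR (s₁ - k)) (exp_pos (c * R ^ k))]) hΓ1
    linarith
  have hC₂ : 0 ≤ C₂ := by
    by_contra h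
    push_neg at h
    have hx := (abs_nonneg (g R)).trans (hg R ⟨hR, le_rfl⟩)
    have hneg : C₂ * R ^ (s₂ - k) * exp (c * R ^ k) / Gamma (s₂ / k) < 0 :=
      div_neg_of_neg_of_pos
        (by nlinarith [mul_pos (rpow_pos_of_pos hR (s₂ - k)) (exp_pos (c * R ^ k))]) hΓ2
    linarith
  obtain ⟨hInt, hVal⟩ := my_subst (k := k) (s₁ := s₁) (s₂ := s₂) hk hs₁ hs₂ hξ0
  set K := C₁ * C₂ * exp (c * ξ ^ k) / (Gamma (s₁ / k) * Gamma (s₂ / k)) with hK_def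
  have hK : 0 ≤ K := div_nonneg (mul_nonneg (mul_nonneg hC₁ hC₂) (exp_pos _).le)
    (mul_nonneg hΓ1.le hΓ2.le)
  set G : ℝ → ℝ := fun t => K * (k * ((ξ ^ k - t ^ k) ^ (s₁ / k - 1) * t ^ (s₂ - 1)))
    with hG_def
  have hGint : IntervalIntegrable G volume 0 ξ := by
    rw [intervalIntegrable_iff_integrableOn_Ioc_of_le hξ0.le]
    exact hInt.const_mul K
  have hae : ∀ᵐ t ∂(volume.restrict (Set.uIoc (0:ℝ) ξ)),
      ‖f ((ξ ^ k - t ^ k) ^ (1 / k)) * g t * (k * t ^ (k - 1))‖ ≤ G t := by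
    have h1 : ∀ᵐ t ∂(volume.restrict (Set.uIoc (0:ℝ) ξ)), t ∈ Set.uIoc (0:ℝ) ξ :=
      ae_restrict_mem measurableSet_uIoc
    have h2 : ∀ᵐ t ∂(volume.restrict (Set.uIoc (0:ℝ) ξ)), t ≠ ξ := by
      refine ae_restrict_of_ae ?_
      have hm : (volume : Measure ℝ) {ξ} = 0 := measure_singleton ξ
      rw [ae_iff]
      simpa only [ne_eq, not_not, Set.setOf_eq_eq_singleton] using hm
    filter_upwards [h1, h2] with t ht htne
    rw [Set.uIoc_of_le hξ0.le] at ht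
    have ht0 : 0 < t := ht.1
    have htξ : t < ξ := lt_of_le_of_ne ht.2 htne
    have hsub : 0 < ξ ^ k - t ^ k := sub_pos.2 (Real.rpow_lt_rpow ht0.le htξ hk)
    set x := (ξ ^ k - t ^ k) ^ (1 / k) with hx_def
    have hx0 : 0 < x := rpow_pos_of_pos hsub _
    have hxk : x ^ k = ξ ^ k - t ^ k := by
      rw [hx_def, ← Real.rpow_mul hsub.le, one_div, inv_mul_cancel₀ hk.ne', Real.rpow_one]
    have hxR : x ≤ R := by
      have h5 : x ^ k ≤ R ^ k := by
        rw [hxk]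
        have := Real.rpow_le_rpow hξ0.le hξR hk.le
        nlinarith [rpow_pos_of_pos ht0 k]
      exact (Real.rpow_le_rpow_iff hx0.le hR.le hk).1 h5
    have hfx := hf x ⟨hx0, hxR⟩
    have hgt := hg t ⟨ht0, ht.2.trans hξR⟩
    have hkt : 0 < k * t ^ (k - 1) := mul_pos hk (rpow_pos_of_pos ht0 _)
    rw [Real.norm_eq_abs, abs_mul, abs_mul, abs_of_pos hkt]
    have hBf : (0:ℝ) ≤ C₁ * x ^ (s₁ - k) * exp (c * x ^ k) / Gamma (s₁ / k) :=
      div_nonneg (mul_nonneg (mul_nonneg hC₁ (rpow_nonneg hx0.le _)) (exp_pos _).le) hΓ1.le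
    calc |f x| * |g t| * (k * t ^ (k - 1))
        ≤ (C₁ * x ^ (s₁ - k) * exp (c * x ^ k) / Gamma (s₁ / k)) *
          (C₂ * t ^ (s₂ - k) * exp (c * t ^ k) / Gamma (s₂ / k)) * (k * t ^ (k - 1)) :=
          mul_le_mul_of_nonneg_right (mul_le_mul hfx hgt (abs_nonneg _) hBf) hkt.le
      _ = G t := by
          have e1 : x ^ (s₁ - k) = (ξ ^ k - t ^ k) ^ (s₁ / k - 1) := by
            rw [hx_def, ← Real.rpow_mul hsub.le]
            congr 1
            field_simp
          have e3 : exp (c * (ξ ^ k - t ^ k)) * exp (c * t ^ k) = exp (c * ξ ^ k) := by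
            rw [← exp_add]; congr 1; ring
          have e4 : t ^ (s₂ - k) * t ^ (k - 1) = t ^ (s₂ - 1) := by
            rw [← Real.rpow_add ht0]; congr 1; ring
          rw [hG_def]
          simp only
          rw [hK_def, e1, hxk, ← e3, ← e4]
          field_simp
  have hmain := intervalIntegral.norm_integral_le_abs_of_norm_le hae hGint
  rw [Real.norm_eq_abs] at hmain
  refine hmain.trans ?_
  have hGval : ∫ t in (0:ℝ)..ξ, G t
      = C₁ * C₂ * ξ ^ (s₁ + s₂ - k) * exp (c * ξ ^ k) / Gamma ((s₁ + s₂) / k) := by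
    rw [hG_def]
    simp only
    rw [intervalIntegral.integral_const_mul, hVal, hK_def]
    field_simp
  rw [hGval, abs_of_nonneg (div_nonneg (mul_nonneg (mul_nonneg (mul_nonneg hC₁ hC₂)
    (rpow_nonneg hξ0.le _)) (exp_pos _).le) hΓ3.le)]
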